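/- arXiv:2012.13053 — 8 statements merged into one kernel-verified Lean document; each statement's English description precedes it below -/
import Mathlib

section
/- For every integer b ≥ 1 and every real β ≥ 0, the normalized truncated mean of a Poisson random variable with parameter bβ satisfies the identity (1/b)·( Σ_{k=0}^{b} k·e^{−bβ}(bβ)^k/k! + b·Σ_{k=b+1}^{∞} e^{−bβ}(bβ)^k/k! ) = 1 − e^{−bβ}(bβ)^b/b! − e^{−bβ}(1−β)·Σ_{k=0}^{b−1} (bβ)^k/k!. -/
/-- For every integer `b ≥ 1` and every real `β ≥ 0`, the normalized truncated mean of a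
Poisson random variable with parameter `bβ` satisfies
`(1/b)·( Σ_{k=0}^{b} k·e^{−bβ}(bβ)^k/k! + b·Σ_{k=b+1}^{∞} e^{−bβ}(bβ)^k/k! )
  = 1 − e^{−bβ}(bβ)^b/b! − e^{−bβ}(1−β)·Σ_{k=0}^{b−1} (bβ)^k/k!`. -/
theorem poisson_truncated_mean_identity (b : ℕ) (hb : 1 ≤ b) (β : ℝ) (hβ : 0 ≤ β) :
    (1 / (b : ℝ)) *
      ((∑ k ∈ Finset.range (b + 1),
          (k : ℝ) * (Real.exp (-((b : ℝ) * β)) * ((b : ℝ) * β) ^ k / (Nat.factorial k))) +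
        (b : ℝ) *
          (∑' k : ℕ,
            Real.exp (-((b : ℝ) * β)) * ((b : ℝ) * β) ^ (k + b + 1) /
              (Nat.factorial (k + b + 1)))) =
    1 - Real.exp (-((b : ℝ) * β)) * ((b : ℝ) * β) ^ b / (Nat.factorial b) -
      Real.exp (-((b : ℝ) * β)) * (1 - β) *
        ∑ k ∈ Finset.range b, ((b : ℝ) * β) ^ k / (Nat.factorial k) := by
  have hb0 : (b : ℝ) ≠ 0 := Nat.cast_ne_zero.2 (by omega)
  set L : ℝ := (b : ℝ) * β with hL
  have hsum : Summable (fun k : ℕ => L ^ k / (Nat.factorial k : ℝ)) :=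
    Real.summable_pow_div_factorial L
  have hexp : (∑' k : ℕ, L ^ k / (Nat.factorial k : ℝ)) = Real.exp L := by
    rw [Real.exp_eq_exp_ℝ, NormedSpace.exp_eq_tsum_div]
  have htail : (∑' k : ℕ, Real.exp (-L) * L ^ (k + b + 1) / (Nat.factorial (k + b + 1) : ℝ))
      = Real.exp (-L) * (Real.exp L - ∑ k ∈ Finset.range (b + 1), L ^ k / (Nat.factorial k : ℝ)) := by
    have h1 : ∀ k : ℕ, Real.exp (-L) * L ^ (k + b + 1) / (Nat.factorial (k + b + 1) : ℝ)
        = Real.exp (-L) * (L ^ (k + (b + 1)) / (Nat.factorial (k + (b + 1)) : ℝ)) := by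
      intro k; rw [show k + b + 1 = k + (b + 1) by omega]; ring
    rw [tsum_congr h1, tsum_mul_left]
    have h2 := Summable.sum_add_tsum_nat_add (b + 1) hsum
    rw [hexp] at h2
    have : (∑' k : ℕ, L ^ (k + (b + 1)) / (Nat.factorial (k + (b + 1)) : ℝ))
        = Real.exp L - ∑ k ∈ Finset.range (b + 1), L ^ k / (Nat.factorial k : ℝ) := by
      linarith [h2]
    rw [this]
  have hfirst : (∑ k ∈ Finset.range (b + 1),
      (k : ℝ) * (Real.exp (-L) * L ^ k / (Nat.factorial k : ℝ)))
      = L * Real.exp (-L) * ∑ k ∈ Finset.range b, L ^ k / (Nat.factorial k : ℝ) := by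
    rw [Finset.sum_range_succ']
    simp only [Nat.cast_zero, zero_mul, add_zero, Finset.mul_sum]
    apply Finset.sum_congr rfl
    intro k _
    have hk : ((Nat.factorial k : ℝ)) ≠ 0 := Nat.cast_ne_zero.2 (Nat.factorial_ne_zero k)
    rw [Nat.factorial_succ]
    push_cast
    field_simp
    ring
  rw [hfirst, htail, Finset.sum_range_succ]
  have hpl : Real.exp (-L) * Real.exp L = 1 := by
    rw [← Real.exp_add]; simp
  field_simp
  linear_combination (b : ℝ) * (Nat.factorial b : ℝ) * hpl
end

section
/- For every integer b ≥ 1 and every real β with 0 ≤ β ≤ 1, defining α(β,b) := 1 − e^{−bβ}(bβ)^b/b! − e^{−bβ}(1−β)·Σ_{k=0}^{b−1}(bβ)^k/k!, one has the upper bound α(β,b) ≤ β + (1 − β − e^{−bβ})·(bβ)^b/b!. -/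
/-- The fraction of balls removed per round when bin loads are Poisson with parameter `bβ`:
`α(β,b) := 1 − e^{−bβ}(bβ)^b/b! − e^{−bβ}(1−β)·Σ_{k=0}^{b−1}(bβ)^k/k!`. -/
noncomputable def alphaFn (β : ℝ) (b : ℕ) : ℝ :=
  1 - Real.exp (-((b : ℝ) * β)) * ((b : ℝ) * β) ^ b / (Nat.factorial b) -
    Real.exp (-((b : ℝ) * β)) * (1 - β) *
      ∑ k ∈ Finset.range b, ((b : ℝ) * β) ^ k / (Nat.factorial k)

lemma exp_eq_tsum_pow_div (x : ℝ) :
    Real.exp x = ∑' n : ℕ, x ^ n / (Nat.factorial n) := by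
  rw [Real.exp_eq_exp_ℝ, NormedSpace.exp_eq_tsum_div]

lemma summable_pow_div_fact (x : ℝ) : Summable fun n : ℕ => x ^ n / (Nat.factorial n) := by
  simpa [div_eq_mul_inv, mul_comm] using Real.summable_pow_div_factorial x

lemma tail_bound (b : ℕ) (x : ℝ) (hx : 0 ≤ x) :
    Real.exp x - ∑ k ∈ Finset.range b, x ^ k / (Nat.factorial k) ≤
      x ^ b / (Nat.factorial b) * Real.exp x := by
  have hsum := summable_pow_div_fact x
  have hsplit := Summable.sum_add_tsum_nat_add b hsum
  have h1 : Real.exp x - ∑ k ∈ Finset.range b, x ^ k / (Nat.factorial k)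
      = ∑' k : ℕ, x ^ (k + b) / (Nat.factorial (k + b)) := by
    rw [exp_eq_tsum_pow_div, ← hsplit]; ring
  rw [h1]
  have h2 : ∑' k : ℕ, x ^ b / (Nat.factorial b) * (x ^ k / (Nat.factorial k))
      = x ^ b / (Nat.factorial b) * Real.exp x := by
    rw [tsum_mul_left, exp_eq_tsum_pow_div]
  rw [← h2]
  refine Summable.tsum_le_tsum (fun k => ?_) ((summable_nat_add_iff b).mpr hsum)
    (hsum.mul_left _)
  have hfac : (Nat.factorial b : ℝ) * (Nat.factorial k) ≤ Nat.factorial (k + b) := by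
    exact_mod_cast Nat.le_of_dvd (Nat.factorial_pos _)
      (by simpa [mul_comm] using Nat.factorial_mul_factorial_dvd_factorial_add k b)
  have hpos : (0 : ℝ) < (Nat.factorial b : ℝ) * (Nat.factorial k) := by positivity
  calc x ^ (k + b) / (Nat.factorial (k + b))
      ≤ x ^ (k + b) / ((Nat.factorial b : ℝ) * (Nat.factorial k)) :=
        div_le_div_of_nonneg_left (by positivity) hpos hfac
    _ = x ^ b / (Nat.factorial b) * (x ^ k / (Nat.factorial k)) := by
        rw [pow_add]; ring

/-- For every integer `b ≥ 1` and every real `β` with `0 ≤ β ≤ 1`, one has the upper bound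
`α(β,b) ≤ β + (1 − β − e^{−bβ})·(bβ)^b/b!`. -/
theorem alphaFn_upper_bound (b : ℕ) (hb : 1 ≤ b) (β : ℝ) (hβ0 : 0 ≤ β) (hβ1 : β ≤ 1) :
    alphaFn β b ≤
      β + (1 - β - Real.exp (-((b : ℝ) * β))) * ((b : ℝ) * β) ^ b / (Nat.factorial b) := by
  set x : ℝ := (b : ℝ) * β with hxdef
  have hx : 0 ≤ x := by positivity
  have hE : Real.exp (-x) * Real.exp x = 1 := by
    rw [← Real.exp_add]; simp
  have hEpos : 0 < Real.exp (-x) := Real.exp_pos _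
  have htail := tail_bound b x hx
  set S : ℝ := ∑ k ∈ Finset.range b, x ^ k / (Nat.factorial k) with hS
  have hkey : 1 - Real.exp (-x) * S ≤ x ^ b / (Nat.factorial b) := by
    have h := mul_le_mul_of_nonneg_left htail hEpos.le
    have e1 : Real.exp (-x) * (Real.exp x - S) = 1 - Real.exp (-x) * S := by
      rw [mul_sub, hE]
    have e2 : Real.exp (-x) * (x ^ b / (Nat.factorial b) * Real.exp x)
        = x ^ b / (Nat.factorial b) := by
      rw [mul_comm (x ^ b / (Nat.factorial b)) (Real.exp x), ← mul_assoc, hE, one_mul]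
    rw [e1, e2] at h
    exact h
  have hβ : 0 ≤ 1 - β := by linarith
  have := mul_le_mul_of_nonneg_left hkey hβ
  unfold alphaFn
  rw [← hxdef, ← hS]
  rw [mul_div_assoc, mul_div_assoc]
  nlinarith [this]
end

section
/- For every integer b ≥ 1 and every real β with 0 ≤ β ≤ 1, defining α(β,b) := 1 − e^{−bβ}(bβ)^b/b! − e^{−bβ}(1−β)·Σ_{k=0}^{b−1}(bβ)^k/k!, one has |α(β,b) − β| ≤ (eβ)^b; in particular, for fixed β < 1/e the gap |α(β,b) − β| is exponentially small in b. -/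
lemma exp_sub_partial_sum_le (x : ℝ) (hx : 0 ≤ x) (b : ℕ) :
    Real.exp x - ∑ k ∈ Finset.range b, x ^ k / (Nat.factorial k) ≤
      x ^ b / (Nat.factorial b) * Real.exp x := by
  have hsum : Summable (fun n : ℕ => x ^ n / (Nat.factorial n)) :=
    Real.summable_pow_div_factorial x
  have hexp : Real.exp x = ∑' n : ℕ, x ^ n / (Nat.factorial n) := by
    rw [Real.exp_eq_exp_ℝ, NormedSpace.exp_eq_tsum_div]
  have hsplit := Summable.sum_add_tsum_nat_add b hsum
  have htail : (∑' n : ℕ, x ^ (n + b) / (Nat.factorial (n + b))) ≤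
      ∑' n : ℕ, x ^ b / (Nat.factorial b) * (x ^ n / (Nat.factorial n)) := by
    refine Summable.tsum_le_tsum (fun n => ?_) ((summable_nat_add_iff b).2 hsum)
      (hsum.mul_left _)
    have hfac : (Nat.factorial n : ℝ) * (Nat.factorial b : ℝ) ≤ Nat.factorial (n + b) := by
      exact_mod_cast Nat.le_of_dvd (Nat.factorial_pos _)
        (Nat.factorial_mul_factorial_dvd_factorial_add n b)
    have hx1 : (0:ℝ) < Nat.factorial n := by positivity
    have hx2 : (0:ℝ) < Nat.factorial b := by positivity
    have hx3 : (0:ℝ) < Nat.factorial (n + b) := by positivity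
    rw [pow_add, div_mul_div_comm, mul_comm (x ^ b) (x ^ n)]
    apply div_le_div_of_nonneg_left (by positivity) (by positivity)
    linarith [hfac]
  have htsum_mul : (∑' n : ℕ, x ^ b / (Nat.factorial b) * (x ^ n / (Nat.factorial n)))
      = x ^ b / (Nat.factorial b) * Real.exp x := by
    rw [tsum_mul_left, ← hexp]
  calc Real.exp x - ∑ k ∈ Finset.range b, x ^ k / (Nat.factorial k)
      = ∑' n : ℕ, x ^ (n + b) / (Nat.factorial (n + b)) := by
        rw [hexp, ← hsplit]; ring
    _ ≤ _ := htail.trans_eq htsum_mul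

/-- For every integer `b ≥ 1` and every real `β` with `0 ≤ β ≤ 1`, one has
`|α(β,b) − β| ≤ (eβ)^b`; in particular, for fixed `β < 1/e` the gap is exponentially
small in `b`. -/
theorem alphaFn_close_to_beta (b : ℕ) (hb : 1 ≤ b) (β : ℝ) (hβ0 : 0 ≤ β) (hβ1 : β ≤ 1) :
    |alphaFn β b - β| ≤ (Real.exp 1 * β) ^ b := by
  set x : ℝ := (b : ℝ) * β with hxdef
  have hx : 0 ≤ x := by positivity
  set E : ℝ := Real.exp (-x) with hEdef
  set S : ℝ := ∑ k ∈ Finset.range b, x ^ k / (Nat.factorial k) with hSdef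
  set T : ℝ := x ^ b / (Nat.factorial b) with hTdef
  have hEpos : 0 < E := Real.exp_pos _
  have hE1 : E ≤ 1 := Real.exp_le_one_iff.mpr (by linarith)
  have hEexp : E * Real.exp x = 1 := by
    rw [hEdef, ← Real.exp_add]; simp
  have hS0 : 0 ≤ S := Finset.sum_nonneg fun k _ => by positivity
  have hT0 : 0 ≤ T := by positivity
  have hkey := exp_sub_partial_sum_le x hx b
  -- 1 - E*S ≤ T, multiply hkey by E
  have h2 : 1 - E * S ≤ T := by
    have := mul_le_mul_of_nonneg_left hkey hEpos.le
    have h' : E * (Real.exp x - S) = 1 - E * S := by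
      rw [mul_sub, hEexp]
    have h'' : E * (T * Real.exp x) = T := by
      rw [mul_comm T, ← mul_assoc, hEexp, one_mul]
    linarith [this, h'.symm ▸ this]
  have hES1 : E * S ≤ 1 := by
    have hSle : S ≤ Real.exp x := Real.sum_le_exp_of_nonneg hx b
    calc E * S ≤ E * Real.exp x := by nlinarith
      _ = 1 := hEexp
  have halpha : alphaFn β b - β = (1 - β) * (1 - E * S) - E * T := by
    simp only [alphaFn, hEdef, hSdef, hTdef, hxdef]; ring
  have hTle : T ≤ (Real.exp 1 * β) ^ b := by
    have hb1 : x ^ b = (b : ℝ) ^ b * β ^ b := by rw [hxdef, mul_pow]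
    have h3 : ((b : ℝ)) ^ b / (Nat.factorial b) ≤ Real.exp b := by
      have := Real.pow_div_factorial_le_exp (x := (b : ℝ)) (by positivity) b
      exact this
    have h4 : (Real.exp 1 * β) ^ b = Real.exp b * β ^ b := by
      rw [mul_pow, ← Real.exp_nat_mul, mul_one]
    rw [hTdef, hb1, h4]
    have hβb : 0 ≤ β ^ b := by positivity
    calc (b : ℝ) ^ b * β ^ b / (Nat.factorial b)
        = ((b : ℝ) ^ b / (Nat.factorial b)) * β ^ b := by ring
      _ ≤ Real.exp b * β ^ b := by
          exact mul_le_mul_of_nonneg_right h3 hβb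
  rw [halpha]
  rw [abs_le]
  constructor
  · nlinarith
  · nlinarith
end

section
/- For every real λ ≥ 0 and every integer m ≥ 1, the expected excess of a Poisson random variable with parameter λ above the level m satisfies Σ_{i=m+1}^{∞} (i − m) · e^{−λ} λ^i / i! = (λ^{m+1}/(m−1)!) · ∫_0^1 t (1−t)^{m−1} e^{λ(t−1)} dt. -/
open MeasureTheory

lemma real_exp_tsum (x : ℝ) : Real.exp x = ∑' n : ℕ, x ^ n / n.factorial := by
  rw [Real.exp_eq_exp_ℝ]
  exact (NormedSpace.expSeries_div_hasSum_exp x).tsum_eq.symm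

lemma beta_nat : ∀ (b a : ℕ), (∫ x in (0:ℝ)..1, x ^ a * (1 - x) ^ b)
    = (a.factorial * b.factorial : ℝ) / (a + b + 1).factorial := by
  intro b
  induction b with
  | zero =>
    intro a
    simp only [pow_zero, mul_one, Nat.factorial_zero, Nat.cast_one, Nat.add_zero]
    rw [integral_pow]
    rw [Nat.factorial_succ]
    push_cast
    have : (a : ℝ) + 1 ≠ 0 := by positivity
    have h2 : (a.factorial : ℝ) ≠ 0 := by positivity
    field_simp
    simp
  | succ b ih =>
    intro a
    have key : (∫ x in (0:ℝ)..1,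
        (((a:ℝ)+1) * (x ^ a * (1-x) ^ (b+1)) - ((b:ℝ)+1) * (x ^ (a+1) * (1-x) ^ b)))
        = 0 := by
      have hder : ∀ x ∈ Set.uIcc (0:ℝ) 1, HasDerivAt (fun x : ℝ => x ^ (a+1) * (1-x) ^ (b+1))
          (((a:ℝ)+1) * (x ^ a * (1-x) ^ (b+1)) - ((b:ℝ)+1) * (x ^ (a+1) * (1-x) ^ b)) x := by
        intro x _
        have h1 := hasDerivAt_pow (a+1) x
        have h2 : HasDerivAt (fun x : ℝ => (1-x) ^ (b+1))
            (((b:ℝ)+1) * (1-x) ^ b * (-1)) x := by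
          have h0 : HasDerivAt (fun x : ℝ => 1 - x) (-1) x := (hasDerivAt_id x).const_sub 1
          simpa using h0.fun_pow (b+1)
        convert h1.fun_mul h2 using 1
        · rfl
        · rfl
        push_cast
        ring
      have hcont : Continuous (fun x : ℝ =>
          ((a:ℝ)+1) * (x ^ a * (1-x) ^ (b+1)) - ((b:ℝ)+1) * (x ^ (a+1) * (1-x) ^ b)) := by
        fun_prop
      rw [intervalIntegral.integral_eq_sub_of_hasDerivAt hder (hcont.intervalIntegrable _ _)]
      simp
    have hint1 : IntervalIntegrable (fun x : ℝ => x ^ a * (1-x) ^ (b+1)) volume 0 1 :=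
      (by fun_prop : Continuous fun x : ℝ => x ^ a * (1-x) ^ (b+1)).intervalIntegrable _ _
    have hint2 : IntervalIntegrable (fun x : ℝ => x ^ (a+1) * (1-x) ^ b) volume 0 1 :=
      (by fun_prop : Continuous fun x : ℝ => x ^ (a+1) * (1-x) ^ b).intervalIntegrable _ _
    rw [intervalIntegral.integral_sub ((hint1.const_mul _)) (hint2.const_mul _),
      intervalIntegral.integral_const_mul, intervalIntegral.integral_const_mul,
      sub_eq_zero] at key
    have hJ : (∫ x in (0:ℝ)..1, x ^ a * (1-x) ^ (b+1))
        = (((b:ℝ)+1) / ((a:ℝ)+1)) * ∫ x in (0:ℝ)..1, x ^ (a+1) * (1-x) ^ b := by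
      have ha : (a:ℝ) + 1 ≠ 0 := by positivity
      field_simp
      linarith [key]
    rw [hJ, ih (a+1)]
    have h1 : ((a+1) + b + 1) = (a + (b+1) + 1) := by omega
    rw [h1, Nat.factorial_succ (a), Nat.factorial_succ (b)]
    push_cast
    have ha : (a:ℝ) + 1 ≠ 0 := by positivity
    have hfa : ((a.factorial : ℝ)) ≠ 0 := by positivity
    have hden : (((a + (b+1) + 1).factorial : ℝ)) ≠ 0 := by positivity
    field_simp

/-- For every real `λ ≥ 0` and every integer `m ≥ 1`, the expected excess of a Poisson
random variable with parameter `λ` above the level `m` satisfies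
`Σ_{i=m+1}^{∞} (i − m)·e^{−λ} λ^i / i! = (λ^{m+1}/(m−1)!) · ∫_0^1 t(1−t)^{m−1} e^{λ(t−1)} dt`. -/
theorem poisson_expected_excess_integral (l : ℝ) (hl : 0 ≤ l) (m : ℕ) (hm : 1 ≤ m) :
    (∑' i : ℕ, (((i + m + 1 : ℕ) : ℝ) - (m : ℝ)) * (Real.exp (-l) * l ^ (i + m + 1) /
        (Nat.factorial (i + m + 1)))) =
      (l ^ (m + 1) / (Nat.factorial (m - 1))) *
        ∫ t in (0 : ℝ)..1, t * (1 - t) ^ (m - 1) * Real.exp (l * (t - 1)) := by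
  set F : ℕ → ℝ → ℝ := fun k t =>
    (Real.exp (-l) * l ^ k / k.factorial) * (t ^ (k+1) * (1-t) ^ (m-1)) with hF
  -- pointwise series expansion of the integrand
  have hpt : ∀ t : ℝ, t * (1 - t) ^ (m - 1) * Real.exp (l * (t - 1)) = ∑' k, F k t := by
    intro t
    have he : Real.exp (l * (t-1)) = Real.exp (l*t) * Real.exp (-l) := by
      rw [← Real.exp_add]; ring_nf
    rw [he, real_exp_tsum (l*t), ← tsum_mul_right, ← tsum_mul_left]
    refine tsum_congr fun k => ?_
    simp only [hF]
    rw [mul_pow]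
    ring
  -- integrability of each term
  have hcont : ∀ k, Continuous (F k) := by intro k; simp only [hF]; fun_prop
  have hint : ∀ k, IntegrableOn (F k) (Set.Ioc (0:ℝ) 1) volume := fun k =>
    (hcont k).integrableOn_Ioc
  -- value of each integral
  have hval : ∀ k, (∫ t in Set.Ioc (0:ℝ) 1, F k t)
      = (Real.exp (-l) * l ^ k / k.factorial) *
        (((k+1).factorial * (m-1).factorial : ℝ) / (k + m + 1).factorial) := by
    intro k
    rw [← intervalIntegral.integral_of_le (zero_le_one), hF]
    simp only
    rw [intervalIntegral.integral_const_mul, beta_nat (m-1) (k+1)]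
    have : (k + 1) + (m - 1) + 1 = k + m + 1 := by omega
    rw [this]
  -- nonnegativity on the domain gives norm = value
  have hnorm : ∀ k, (∫ t in Set.Ioc (0:ℝ) 1, ‖F k t‖) = ∫ t in Set.Ioc (0:ℝ) 1, F k t := by
    intro k
    refine setIntegral_congr_fun measurableSet_Ioc fun t ht => ?_
    have h1 : 0 ≤ t := le_of_lt ht.1
    have h2 : 0 ≤ 1 - t := by linarith [ht.2]
    rw [Real.norm_of_nonneg]
    simp only [hF]
    positivity
  -- summability of the norms
  have hsum : Summable fun k => ∫ t in Set.Ioc (0:ℝ) 1, ‖F k t‖ := by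
    simp only [hnorm]
    simp only [hval]
    apply Summable.of_nonneg_of_le (fun k => ?_) (fun k => ?_)
      ((Real.summable_pow_div_factorial l).mul_left (Real.exp (-l)))
    · positivity
    · have hb : (((k+1).factorial * (m-1).factorial : ℝ) / (k + m + 1).factorial) ≤ 1 := by
        rw [div_le_one (by positivity)]
        have : (k+1).factorial * (m-1).factorial ≤ (k + m + 1).factorial := by
          calc (k+1).factorial * (m-1).factorial ≤ ((k+1)+(m-1)).factorial :=
                Nat.le_of_dvd (Nat.factorial_pos _)
                  (Nat.factorial_mul_factorial_dvd_factorial_add _ _)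
            _ ≤ (k + m + 1).factorial := Nat.factorial_le (by omega)
        exact_mod_cast this
      calc (Real.exp (-l) * l ^ k / k.factorial) *
            (((k+1).factorial * (m-1).factorial : ℝ) / (k + m + 1).factorial)
          ≤ (Real.exp (-l) * l ^ k / k.factorial) * 1 := by
            apply mul_le_mul_of_nonneg_left hb (by positivity)
        _ = Real.exp (-l) * (l ^ k / k.factorial) := by ring
  -- swap sum and integral
  have hswap : (∫ t in Set.Ioc (0:ℝ) 1, (∑' k, F k t))
      = ∑' k, ∫ t in Set.Ioc (0:ℝ) 1, F k t :=
    (MeasureTheory.integral_tsum_of_summable_integral_norm hint hsum).symm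
  rw [show (∫ t in (0:ℝ)..1, t * (1 - t) ^ (m - 1) * Real.exp (l * (t - 1)))
      = ∫ t in Set.Ioc (0:ℝ) 1, t * (1 - t) ^ (m - 1) * Real.exp (l * (t - 1))
      from intervalIntegral.integral_of_le zero_le_one]
  calc (∑' i : ℕ, (((i + m + 1 : ℕ) : ℝ) - (m : ℝ)) * (Real.exp (-l) * l ^ (i + m + 1) /
        (Nat.factorial (i + m + 1))))
      = ∑' k : ℕ, (l ^ (m + 1) / (Nat.factorial (m - 1))) *
          ((Real.exp (-l) * l ^ k / k.factorial) *
            (((k+1).factorial * (m-1).factorial : ℝ) / (k + m + 1).factorial)) := by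
        refine tsum_congr fun k => ?_
        have hmne : ((m-1).factorial : ℝ) ≠ 0 := by positivity
        have hkne : (k.factorial : ℝ) ≠ 0 := by positivity
        have hdne : ((k+m+1).factorial : ℝ) ≠ 0 := by positivity
        have hcast : ((k + m + 1 : ℕ) : ℝ) - (m : ℝ) = (k : ℝ) + 1 := by push_cast; ring
        have hpow : l ^ (k + m + 1) = l ^ k * l ^ (m+1) := by
          rw [show k+m+1 = k+(m+1) by omega, pow_add]
        rw [hcast, Nat.factorial_succ k, hpow]
        push_cast
        field_simp
    _ = (l ^ (m + 1) / (Nat.factorial (m - 1))) *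
          ∫ t in Set.Ioc (0:ℝ) 1, t * (1 - t) ^ (m - 1) * Real.exp (l * (t - 1)) := by
        rw [tsum_mul_left]
        congr 1
        rw [show (fun t => t * (1 - t) ^ (m - 1) * Real.exp (l * (t - 1)))
            = fun t => ∑' k, F k t from funext hpt] at *
        rw [hswap]
        exact tsum_congr fun k => (hval k).symm
end

section
/- For every real α with 0 < α < 1 and all integers b ≥ 1 and ℓ ≥ 1, one has ((ℓαb)^{ℓb}/(ℓb−1)!) · ∫_0^1 t (1−t)^{ℓb−1} e^{ℓαb(t−1)} dt ≤ (α^b e^{(1−α)b})^{ℓ}; that is, the ℓ-th term of the queue waiting-time series is dominated by the ℓ-th power of α^b e^{(1−α)b}. -/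
lemma key_id (m : ℕ) :
    ∫ u in (0:ℝ)..1, u * (1 - u) ^ m * Real.exp (((m:ℝ)+1) * u) = 1 / ((m:ℝ)+1) := by
  have hm : ((m:ℝ)+1) ≠ 0 := by positivity
  have hF : ∀ u : ℝ, HasDerivAt (fun u : ℝ => -((1-u)^(m+1) * Real.exp (((m:ℝ)+1)*u)) / ((m:ℝ)+1))
      (u * (1-u)^m * Real.exp (((m:ℝ)+1)*u)) u := by
    intro u
    have h1 : HasDerivAt (fun u : ℝ => (1-u)^(m+1)) ((m+1 : ℕ) * (1-u)^m * (-1)) u := by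
      have : HasDerivAt (fun u : ℝ => 1 - u) (-1) u := (hasDerivAt_id u).const_sub 1
      simpa using this.fun_pow (m+1)
    have h2 : HasDerivAt (fun u : ℝ => Real.exp (((m:ℝ)+1)*u)) (Real.exp (((m:ℝ)+1)*u) * ((m:ℝ)+1)) u := by
      exact (Real.hasDerivAt_exp _).comp u (by simpa using (hasDerivAt_id u).const_mul ((m:ℝ)+1))
    have h3 := ((h1.fun_mul h2).fun_neg).div_const ((m:ℝ)+1)
    refine h3.congr_deriv ?_
    push_cast
    rw [div_eq_iff hm]
    ring
  rw [intervalIntegral.integral_eq_sub_of_hasDerivAt (fun u _ => hF u)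
    ((Continuous.intervalIntegrable (by fun_prop) 0 1))]
  norm_num
  ring

lemma pow_self_le_exp_mul_factorial : ∀ n : ℕ, (n:ℝ)^n ≤ Real.exp n * n.factorial := by
  intro n
  induction n with
  | zero => simp
  | succ n ih =>
    rcases Nat.eq_zero_or_pos n with rfl | hn
    · simpa using Real.one_le_exp (by norm_num : (0:ℝ) ≤ 1)
    have hn' : (0:ℝ) < n := by exact_mod_cast hn
    push_cast
    have h1 : ((n:ℝ)+1)^n ≤ Real.exp 1 * (n:ℝ)^n := by
      have hb : (n:ℝ)+1 ≤ Real.exp (1/n) * n := by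
        have := Real.add_one_le_exp (1/(n:ℝ))
        calc (n:ℝ)+1 = (1/n + 1) * n := by field_simp; ring
          _ ≤ Real.exp (1/n) * n := by
              apply mul_le_mul_of_nonneg_right this (le_of_lt hn')
      calc ((n:ℝ)+1)^n ≤ (Real.exp (1/n) * n)^n := by
            apply pow_le_pow_left₀ (by positivity) hb _
        _ = Real.exp (1/n) ^ n * (n:ℝ)^n := mul_pow _ _ _
        _ = Real.exp 1 * (n:ℝ)^n := by
            rw [← Real.exp_nat_mul]
            congr 2
            field_simp
    calc ((n:ℝ)+1)^(n+1) = ((n:ℝ)+1) * ((n:ℝ)+1)^n := by ring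
      _ ≤ ((n:ℝ)+1) * (Real.exp 1 * (n:ℝ)^n) := by
          apply mul_le_mul_of_nonneg_left h1 (by positivity)
      _ ≤ ((n:ℝ)+1) * (Real.exp 1 * (Real.exp n * n.factorial)) := by
          apply mul_le_mul_of_nonneg_left (mul_le_mul_of_nonneg_left ih (by positivity)) (by positivity)
      _ = Real.exp ((n:ℕ)+1) * (((n:ℕ)+1) * n.factorial) := by
          rw [Real.exp_add]; push_cast; ring
      _ = Real.exp ((n:ℕ)+1) * (n+1).factorial := by
          rw [Nat.factorial_succ]; push_cast; ring

/-- For every real `α` with `0 < α < 1` and all integers `b ≥ 1` and `ℓ ≥ 1`, one has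
`((ℓαb)^{ℓb}/(ℓb−1)!) · ∫_0^1 t (1−t)^{ℓb−1} e^{ℓαb(t−1)} dt ≤ (α^b e^{(1−α)b})^ℓ`:
the `ℓ`-th term of the queue waiting-time series is dominated by the `ℓ`-th power of
`α^b e^{(1−α)b}`. -/
theorem queue_waiting_time_term_bound (α : ℝ) (hα0 : 0 < α) (hα1 : α < 1)
    (b l : ℕ) (hb : 1 ≤ b) (hl : 1 ≤ l) :
    ((l : ℝ) * α * (b : ℝ)) ^ (l * b) / (Nat.factorial (l * b - 1)) *
        ∫ t in (0 : ℝ)..1, t * (1 - t) ^ (l * b - 1) *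
          Real.exp ((l : ℝ) * α * (b : ℝ) * (t - 1)) ≤
      (α ^ b * Real.exp ((1 - α) * (b : ℝ))) ^ l := by
  obtain ⟨m, hmn⟩ : ∃ m, l * b = m + 1 :=
    ⟨l * b - 1, (Nat.succ_pred_eq_of_pos (Nat.mul_le_mul hl hb)).symm⟩
  set n : ℕ := l * b with hn
  have hnm1 : n - 1 = m := by omega
  set x : ℝ := (l : ℝ) * α * (b : ℝ) with hx
  have hnpos : (0:ℝ) < n := by
    have : 0 < n := by omega
    exact_mod_cast this
  have hxn : x = α * n := by rw [hx, hn]; push_cast; ring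
  have hx0 : 0 < x := by rw [hxn]; positivity
  have hxlen : x ≤ (n:ℝ) := by
    rw [hxn]
    nlinarith
  -- step 1: the integral is at most exp(-x) / n
  have hI : (∫ t in (0 : ℝ)..1, t * (1 - t) ^ (n - 1) * Real.exp (x * (t - 1)))
      ≤ Real.exp (-x) * (1 / n) := by
    have hle : ∀ t ∈ Set.Icc (0:ℝ) 1,
        t * (1 - t) ^ (n-1) * Real.exp (x * (t - 1))
          ≤ Real.exp (-x) * (t * (1 - t) ^ m * Real.exp (((m:ℝ)+1) * t)) := by
      intro t ht
      obtain ⟨ht0, ht1⟩ := ht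
      rw [hnm1]
      have h1 : Real.exp (x * (t-1)) = Real.exp (-x) * Real.exp (x * t) := by
        rw [← Real.exp_add]; ring_nf
      rw [h1]
      have hmn' : ((m:ℝ)+1) = (n:ℝ) := by
        have : (n:ℕ) = m + 1 := hmn
        rw [this]; push_cast; ring
      have h2 : Real.exp (x * t) ≤ Real.exp (((m:ℝ)+1) * t) := by
        apply Real.exp_le_exp.2
        rw [hmn']
        exact mul_le_mul_of_nonneg_right hxlen ht0
      have h3 : (0:ℝ) ≤ t * (1-t)^m := by
        apply mul_nonneg ht0 (pow_nonneg (by linarith) m)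
      calc t * (1-t)^m * (Real.exp (-x) * Real.exp (x*t))
          = Real.exp (-x) * (t * (1-t)^m * Real.exp (x*t)) := by ring
        _ ≤ Real.exp (-x) * (t * (1-t)^m * Real.exp (((m:ℝ)+1)*t)) := by
            apply mul_le_mul_of_nonneg_left _ (Real.exp_nonneg _)
            exact mul_le_mul_of_nonneg_left h2 h3
    calc (∫ t in (0 : ℝ)..1, t * (1 - t) ^ (n - 1) * Real.exp (x * (t - 1)))
        ≤ ∫ t in (0 : ℝ)..1, Real.exp (-x) * (t * (1 - t) ^ m * Real.exp (((m:ℝ)+1) * t)) := by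
          apply intervalIntegral.integral_mono_on (by norm_num)
            (Continuous.intervalIntegrable (by fun_prop) 0 1)
            (Continuous.intervalIntegrable (by fun_prop) 0 1) hle
      _ = Real.exp (-x) * (1 / ((m:ℝ)+1)) := by
          rw [intervalIntegral.integral_const_mul, key_id]
      _ = Real.exp (-x) * (1 / n) := by
          congr 2
          have : (n:ℕ) = m + 1 := hmn
          rw [this]; push_cast; ring
  -- step 2: combine
  have hC : (0:ℝ) ≤ x ^ n / (Nat.factorial (n-1)) := by positivity
  have key : x ^ n / (Nat.factorial (n-1)) *
      (∫ t in (0 : ℝ)..1, t * (1 - t) ^ (n - 1) * Real.exp (x * (t - 1)))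
      ≤ α ^ n * Real.exp ((1-α) * n) := by
    have step1 : x ^ n / (Nat.factorial (n-1)) *
        (∫ t in (0 : ℝ)..1, t * (1 - t) ^ (n - 1) * Real.exp (x * (t - 1)))
        ≤ x ^ n / (Nat.factorial (n-1)) * (Real.exp (-x) * (1/n)) :=
      mul_le_mul_of_nonneg_left hI hC
    have hfact : ((n:ℕ).factorial : ℝ) = (n:ℝ) * (Nat.factorial (n-1)) := by
      have : (n:ℕ) = m + 1 := hmn
      rw [this]
      simp [Nat.factorial_succ, hnm1]
    have step2 : x ^ n / (Nat.factorial (n-1)) * (Real.exp (-x) * (1/n))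
        = x ^ n * Real.exp (-x) / (Nat.factorial n) := by
      rw [hfact]
      have h1 : ((Nat.factorial (n-1)) : ℝ) ≠ 0 := by positivity
      field_simp
    have hpow : (n:ℝ)^n ≤ Real.exp n * (Nat.factorial n) := pow_self_le_exp_mul_factorial n
    have step3 : x ^ n * Real.exp (-x) / (Nat.factorial n) ≤ α ^ n * Real.exp ((1-α) * n) := by
      have hxpow : x ^ n = α ^ n * (n:ℝ)^n := by rw [hxn, mul_pow]
      have hfn : (0:ℝ) < (Nat.factorial n : ℝ) := by positivity
      rw [hxpow, div_le_iff₀ hfn]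
      have : α ^ n * (n:ℝ)^n * Real.exp (-x) ≤ α ^ n * (Real.exp n * Nat.factorial n) * Real.exp (-x) := by
        apply mul_le_mul_of_nonneg_right _ (Real.exp_nonneg _)
        exact mul_le_mul_of_nonneg_left hpow (by positivity)
      calc α ^ n * (n:ℝ)^n * Real.exp (-x) ≤ α ^ n * (Real.exp n * Nat.factorial n) * Real.exp (-x) := this
        _ = α ^ n * Real.exp ((1-α) * n) * Nat.factorial n := by
            rw [hxn, show ((1:ℝ)-α) * (n:ℝ) = (n:ℝ) + -(α*(n:ℝ)) from by ring, Real.exp_add]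
            ring
    calc _ ≤ _ := step1
      _ = _ := step2
      _ ≤ _ := step3
  have hRHS : (α ^ b * Real.exp ((1 - α) * (b : ℝ))) ^ l = α ^ n * Real.exp ((1-α) * n) := by
    rw [mul_pow, ← pow_mul, ← Real.exp_nat_mul, hn]
    push_cast
    ring_nf
  rw [hRHS]
  exact key
end

section
/- For every real α with 0 < α < 1 and every integer b ≥ 1, setting q := α^b e^{(1−α)b} (which satisfies 0 < q < 1), the series Σ_{ℓ=1}^{∞} ((ℓαb)^{ℓb}/(ℓb−1)!) · ∫_0^1 t (1−t)^{ℓb−1} e^{ℓαb(t−1)} dt converges and is at most q/(1−q) = α^b e^{(1−α)b} / (1 − α^b e^{(1−α)b}). -/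
open Real

private lemma ftc_aux (n : ℕ) (hn : 1 ≤ n) :
    ∫ t in (0:ℝ)..1, t * (1 - t) ^ (n - 1) * Real.exp ((n:ℝ) * (t - 1))
      = Real.exp (-(n:ℝ)) / n := by
  have hn0 : (n:ℝ) ≠ 0 := Nat.cast_ne_zero.mpr (by omega)
  have key : ∀ t : ℝ, HasDerivAt (fun t => -((1 - t) ^ n * Real.exp ((n:ℝ) * (t - 1))) / n)
      (t * (1 - t) ^ (n - 1) * Real.exp ((n:ℝ) * (t - 1))) t := by
    intro t
    have h1 : HasDerivAt (fun t : ℝ => (1 - t) ^ n)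
        (((n:ℝ) * (1 - t) ^ (n - 1)) * -1) t :=
      ((hasDerivAt_id t).const_sub 1).pow n
    have h2 : HasDerivAt (fun t : ℝ => Real.exp ((n:ℝ) * (t - 1)))
        (Real.exp ((n:ℝ) * (t - 1)) * ((n:ℝ) * 1)) t :=
      (((hasDerivAt_id t).sub_const 1).const_mul (n:ℝ)).exp
    have h3 := ((h1.mul h2).div_const (n:ℝ)).neg
    have h4 : HasDerivAt (fun t => -((1 - t) ^ n * Real.exp ((n:ℝ) * (t - 1))) / n)
        (-((((n:ℝ) * (1 - t) ^ (n - 1)) * -1 * Real.exp ((n:ℝ) * (t - 1)) +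
          (1 - t) ^ n * (Real.exp ((n:ℝ) * (t - 1)) * ((n:ℝ) * 1))) / n)) t := by
      simpa [neg_div, Pi.neg_def] using h3
    convert h4 using 1
    have hpow : (1 - t) ^ n = (1 - t) ^ (n - 1) * (1 - t) := by
      rw [← pow_succ]; congr 1; omega
    rw [hpow]; field_simp; ring
  rw [intervalIntegral.integral_eq_sub_of_hasDerivAt (fun t _ => key t)
    (Continuous.intervalIntegrable (by fun_prop) _ _)]
  have : ((1:ℝ) - 1) = 0 := by norm_num
  simp [zero_pow (by omega : n ≠ 0), neg_div]

private lemma pow_le_exp_fact (n : ℕ) : ((n:ℝ))^n ≤ Real.exp n * (Nat.factorial n : ℝ) := by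
  have hs : (n:ℝ)^n / (Nat.factorial n : ℝ) ≤ ∑ i ∈ Finset.range (n+1), (n:ℝ)^i / (Nat.factorial i : ℝ) :=
    Finset.single_le_sum (f := fun i => (n:ℝ)^i / (Nat.factorial i : ℝ))
      (fun i _ => by positivity) (Finset.self_mem_range_succ n)
  have he := Real.sum_le_exp_of_nonneg (Nat.cast_nonneg n) (n+1)
  have : (n:ℝ)^n / (Nat.factorial n : ℝ) ≤ Real.exp n := hs.trans he
  have hf : (0:ℝ) < (Nat.factorial n : ℝ) := by positivity
  calc ((n:ℝ))^n = ((n:ℝ)^n / (Nat.factorial n : ℝ)) * (Nat.factorial n : ℝ) := by field_simp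
    _ ≤ Real.exp n * (Nat.factorial n : ℝ) := by
        apply mul_le_mul_of_nonneg_right this hf.le

private lemma term_le (α : ℝ) (hα0 : 0 < α) (hα1 : α < 1) (n : ℕ) (hn : 1 ≤ n) :
    (α * n) ^ n / (Nat.factorial (n-1) : ℝ) *
      ∫ t in (0:ℝ)..1, t * (1 - t) ^ (n - 1) * Real.exp (α * n * (t - 1))
      ≤ α ^ n * Real.exp ((1 - α) * n) := by
  have hnpos : (0:ℝ) < n := by exact_mod_cast Nat.pos_of_ne_zero (by omega)
  have hI : (∫ t in (0:ℝ)..1, t * (1 - t) ^ (n - 1) * Real.exp (α * n * (t - 1)))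
      ≤ Real.exp (-(α * n)) / n := by
    have hint1 : IntervalIntegrable
        (fun t => t * (1 - t) ^ (n - 1) * Real.exp (α * n * (t - 1)))
        MeasureTheory.volume 0 1 := Continuous.intervalIntegrable (by fun_prop) _ _
    have hint2 : IntervalIntegrable
        (fun t => Real.exp ((n:ℝ) - α * n) * (t * (1 - t) ^ (n - 1) * Real.exp ((n:ℝ) * (t - 1))))
        MeasureTheory.volume 0 1 := Continuous.intervalIntegrable (by fun_prop) _ _
    have hmono := intervalIntegral.integral_mono_on (by norm_num : (0:ℝ) ≤ 1) hint1 hint2 ?_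
    · have hconst : (∫ t in (0:ℝ)..1, Real.exp ((n:ℝ) - α * n) *
          (t * (1 - t) ^ (n - 1) * Real.exp ((n:ℝ) * (t - 1))))
          = Real.exp ((n:ℝ) - α * n) * (Real.exp (-(n:ℝ)) / n) := by
        rw [intervalIntegral.integral_const_mul, ftc_aux n hn]
      rw [hconst] at hmono
      refine hmono.trans (le_of_eq ?_)
      rw [← mul_div_assoc, ← Real.exp_add]
      congr 1
      ring
    · intro t ht
      obtain ⟨ht0, ht1⟩ := ht
      have hfac : 0 ≤ t * (1 - t) ^ (n - 1) :=
        mul_nonneg ht0 (pow_nonneg (by linarith) _)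
      have h1 : Real.exp (α * n * (t - 1)) ≤
          Real.exp ((n:ℝ) - α * n) * Real.exp ((n:ℝ) * (t - 1)) := by
        rw [← Real.exp_add]
        apply Real.exp_le_exp.mpr
        have hna : 0 ≤ (n:ℝ) - α * n := by nlinarith
        nlinarith [mul_nonneg hna ht0]
      nlinarith [mul_le_mul_of_nonneg_left h1 hfac]
  have hcoef : 0 ≤ (α * n) ^ n / (Nat.factorial (n-1) : ℝ) := by positivity
  have step1 := mul_le_mul_of_nonneg_left hI hcoef
  refine (step1.trans ?_)
  have hfacteq : ((n:ℝ)) * (Nat.factorial (n-1) : ℝ) = (Nat.factorial n : ℝ) := by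
    exact_mod_cast Nat.mul_factorial_pred (by omega)
  have heq : (α * n) ^ n / (Nat.factorial (n-1) : ℝ) * (Real.exp (-(α * n)) / n)
      = α ^ n * ((n:ℝ)^n / (Nat.factorial n : ℝ)) * Real.exp (-(α * n)) := by
    rw [mul_pow, ← hfacteq]
    have hf : (0:ℝ) < (Nat.factorial (n-1) : ℝ) := by positivity
    field_simp
  rw [heq]
  have h3 : (n:ℝ)^n / (Nat.factorial n : ℝ) ≤ Real.exp n := by
    rw [div_le_iff₀ (by positivity)]
    exact pow_le_exp_fact n
  calc α ^ n * ((n:ℝ)^n / (Nat.factorial n : ℝ)) * Real.exp (-(α * n))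
      ≤ α ^ n * Real.exp n * Real.exp (-(α * n)) := by
        apply mul_le_mul_of_nonneg_right _ (Real.exp_pos _).le
        exact mul_le_mul_of_nonneg_left h3 (by positivity)
    _ = α ^ n * Real.exp ((1 - α) * n) := by
        rw [mul_assoc, ← Real.exp_add]; ring_nf

/-- For every real `α` with `0 < α < 1` and every integer `b ≥ 1`, setting
`q := α^b e^{(1−α)b}` (which satisfies `0 < q < 1`), the series
`Σ_{ℓ=1}^{∞} ((ℓαb)^{ℓb}/(ℓb−1)!) · ∫_0^1 t (1−t)^{ℓb−1} e^{ℓαb(t−1)} dt`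
converges and is at most `q/(1−q) = α^b e^{(1−α)b}/(1 − α^b e^{(1−α)b})`. -/
theorem queue_waiting_time_series_bound (α : ℝ) (hα0 : 0 < α) (hα1 : α < 1)
    (b : ℕ) (hb : 1 ≤ b) :
    (0 < α ^ b * Real.exp ((1 - α) * (b : ℝ)) ∧
        α ^ b * Real.exp ((1 - α) * (b : ℝ)) < 1) ∧
      Summable (fun l : ℕ =>
        (((l + 1 : ℕ) : ℝ) * α * (b : ℝ)) ^ ((l + 1) * b) /
            (Nat.factorial ((l + 1) * b - 1)) *
          ∫ t in (0 : ℝ)..1, t * (1 - t) ^ ((l + 1) * b - 1) *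
            Real.exp (((l + 1 : ℕ) : ℝ) * α * (b : ℝ) * (t - 1))) ∧
      (∑' l : ℕ,
          (((l + 1 : ℕ) : ℝ) * α * (b : ℝ)) ^ ((l + 1) * b) /
              (Nat.factorial ((l + 1) * b - 1)) *
            ∫ t in (0 : ℝ)..1, t * (1 - t) ^ ((l + 1) * b - 1) *
              Real.exp (((l + 1 : ℕ) : ℝ) * α * (b : ℝ) * (t - 1))) ≤
        α ^ b * Real.exp ((1 - α) * (b : ℝ)) /
          (1 - α ^ b * Real.exp ((1 - α) * (b : ℝ))) := by
  set q : ℝ := α ^ b * Real.exp ((1 - α) * (b : ℝ)) with hqdef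
  have hq0 : 0 < q := by positivity
  have hq1 : q < 1 := by
    have h2 : α < Real.exp (α - 1) := by
      have := Real.add_one_lt_exp (x := α - 1) (by intro h; nlinarith)
      linarith
    have hae : α * Real.exp (1 - α) < 1 := by
      calc α * Real.exp (1 - α) < Real.exp (α - 1) * Real.exp (1 - α) :=
            mul_lt_mul_of_pos_right h2 (Real.exp_pos _)
        _ = 1 := by rw [← Real.exp_add]; norm_num
    have hqe : q = (α * Real.exp (1 - α)) ^ b := by
      rw [mul_pow, ← Real.exp_nat_mul, mul_comm (b:ℝ) (1 - α)]
    rw [hqe]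
    exact pow_lt_one₀ (by positivity) hae (by omega)
  set f : ℕ → ℝ := fun l : ℕ =>
      (((l + 1 : ℕ) : ℝ) * α * (b : ℝ)) ^ ((l + 1) * b) /
          (Nat.factorial ((l + 1) * b - 1)) *
        ∫ t in (0 : ℝ)..1, t * (1 - t) ^ ((l + 1) * b - 1) *
          Real.exp (((l + 1 : ℕ) : ℝ) * α * (b : ℝ) * (t - 1)) with hfdef
  have hn1 : ∀ l : ℕ, 1 ≤ (l + 1) * b := fun l =>
    Nat.one_le_iff_ne_zero.mpr (mul_ne_zero (Nat.succ_ne_zero l) (by omega))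
  have hcast : ∀ l : ℕ, (((l + 1 : ℕ) : ℝ) * α * (b : ℝ)) = α * ((((l + 1) * b : ℕ)) : ℝ) := by
    intro l; push_cast; ring
  have hterm : ∀ l : ℕ, f l ≤ q ^ (l + 1) := by
    intro l
    have := term_le α hα0 hα1 ((l + 1) * b) (hn1 l)
    have hq : α ^ ((l + 1) * b) * Real.exp ((1 - α) * (((l + 1) * b : ℕ) : ℝ)) = q ^ (l + 1) := by
      rw [hqdef, mul_pow, ← pow_mul, ← Real.exp_nat_mul, mul_comm b (l + 1)]
      congr 1
      push_cast; ring
    rw [hfdef]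
    simp only [hcast]
    rw [← hq]
    exact this
  have hnonneg : ∀ l : ℕ, 0 ≤ f l := by
    intro l
    apply mul_nonneg (by positivity)
    apply intervalIntegral.integral_nonneg (by norm_num)
    intro u hu
    have hu0 : 0 ≤ u := hu.1
    have hu1 : u ≤ 1 := hu.2
    exact mul_nonneg (mul_nonneg hu0 (pow_nonneg (by linarith) _)) (Real.exp_pos _).le
  have hgeo : Summable (fun l : ℕ => q ^ (l + 1)) := by
    simpa [pow_succ] using (summable_geometric_of_lt_one hq0.le hq1).mul_right q
  have hsum : Summable f := Summable.of_nonneg_of_le hnonneg hterm hgeo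
  refine ⟨⟨hq0, hq1⟩, hsum, ?_⟩
  have hle := Summable.tsum_le_tsum hterm hsum hgeo
  have hgeosum : (∑' l : ℕ, q ^ (l + 1)) = q / (1 - q) := by
    have : (fun l : ℕ => q ^ (l + 1)) = fun l : ℕ => q ^ l * q := by
      funext l; rw [pow_succ]
    rw [this, tsum_mul_right, tsum_geometric_of_lt_one hq0.le hq1]
    rw [div_eq_mul_inv, mul_comm]
  rw [hgeosum] at hle
  exact hle
end

section
/- Let d ≥ 2 be an integer and let s : ℕ → ℝ → ℝ be a family of functions such that s_0(t) = 1 for all t ≥ 0, s_i(0) = 0 and s_i(t) ≥ 0 for all i ≥ 1 and t ≥ 0, and for each i ≥ 1 the function s_i is differentiable on [0,∞) with derivative s_i′(t) = (s_{i−1}(t))^d − (s_i(t))^d. Then for all i ≥ 1 and all t ≥ 0, s_i(t) ≤ t^{(d^i − 1)/(d − 1)}. -/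
/-- Fluid-limit analysis of hashing with `d ≥ 2` hash functions and greedy least-loaded
assignment: if `s 0 ≡ 1` on `[0,∞)`, `s i 0 = 0` and `s i ≥ 0` for `i ≥ 1`, and each `s i`
(for `i ≥ 1`) is differentiable on `[0,∞)` with derivative `(s (i−1) t)^d − (s i t)^d`,
then `s i t ≤ t^{(d^i − 1)/(d − 1)}` for all `i ≥ 1` and `t ≥ 0`. -/
theorem fluid_limit_tail_bound (d : ℕ) (hd : 2 ≤ d) (s : ℕ → ℝ → ℝ)
    (hs0 : ∀ t : ℝ, 0 ≤ t → s 0 t = 1)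
    (hinit : ∀ i : ℕ, 1 ≤ i → s i 0 = 0)
    (hnonneg : ∀ i : ℕ, 1 ≤ i → ∀ t : ℝ, 0 ≤ t → 0 ≤ s i t)
    (hderiv : ∀ i : ℕ, 1 ≤ i → ∀ t : ℝ, 0 ≤ t →
      HasDerivWithinAt (s i) ((s (i - 1) t) ^ d - (s i t) ^ d) (Set.Ici 0) t) :
    ∀ i : ℕ, 1 ≤ i → ∀ t : ℝ, 0 ≤ t → s i t ≤ t ^ ((d ^ i - 1) / (d - 1)) := by
  set E : ℕ → ℕ := fun i => ∑ j ∈ Finset.range i, d ^ j with hE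
  have hEsucc : ∀ i, E (i + 1) = d * E i + 1 := by
    intro i
    simp only [hE]
    rw [geom_sum_succ]
  have hnn : ∀ i : ℕ, ∀ t : ℝ, 0 ≤ t → 0 ≤ s i t := by
    intro i t ht
    rcases Nat.eq_zero_or_pos i with h | h
    · rw [h, hs0 t ht]; norm_num
    · exact hnonneg i h t ht
  -- main induction with exponent E i
  have main : ∀ i : ℕ, ∀ t : ℝ, 0 ≤ t → s i t ≤ t ^ E i := by
    intro i
    induction i with
    | zero =>
      intro t ht
      simp only [hE, Finset.range_zero, Finset.sum_empty, pow_zero]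
      rw [hs0 t ht]
    | succ i ih =>
      intro t ht
      -- g t = t ^ E (i+1) - s (i+1) t is monotone on Ici 0
      set e := E (i + 1) with he
      have he1 : 1 ≤ e := by rw [he, hEsucc]; omega
      have hderiv' := hderiv (i + 1) (by omega)
      simp only [Nat.add_sub_cancel] at hderiv'
      have hg : ∀ x ∈ interior (Set.Ici (0 : ℝ)),
          HasDerivWithinAt (fun u : ℝ => u ^ e - s (i + 1) u)
            ((e : ℝ) * x ^ (e - 1) - (s i x ^ d - s (i + 1) x ^ d))
            (interior (Set.Ici (0 : ℝ))) x := by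
        intro x hx
        rw [interior_Ici] at hx ⊢
        exact ((hasDerivAt_pow e x).hasDerivWithinAt).sub
          ((hderiv' x (le_of_lt hx)).mono Set.Ioi_subset_Ici_self)
      have hg0 : ∀ x ∈ interior (Set.Ici (0 : ℝ)),
          0 ≤ (e : ℝ) * x ^ (e - 1) - (s i x ^ d - s (i + 1) x ^ d) := by
        intro x hx
        rw [interior_Ici, Set.mem_Ioi] at hx
        have hx0 : (0 : ℝ) ≤ x := le_of_lt hx
        have h1 : s i x ^ d ≤ (x ^ E i) ^ d :=
          pow_le_pow_left₀ (hnn i x hx0) (ih x hx0) d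
        have h2 : (x ^ E i) ^ d = x ^ (e - 1) := by
          rw [← pow_mul, he, hEsucc]
          congr 1
          rw [Nat.add_sub_cancel, Nat.mul_comm]
        have h3 : x ^ (e - 1) ≤ (e : ℝ) * x ^ (e - 1) := by
          nlinarith [pow_nonneg hx0 (e - 1), (by exact_mod_cast he1 : (1 : ℝ) ≤ (e : ℝ))]
        have h4 : (0 : ℝ) ≤ s (i + 1) x ^ d := pow_nonneg (hnn (i + 1) x hx0) d
        nlinarith [h1, h2.symm ▸ h1]
      have hcont : ContinuousOn (fun u : ℝ => u ^ e - s (i + 1) u) (Set.Ici 0) := by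
        intro x hx
        exact ((continuous_pow e).continuousWithinAt).sub
          (hderiv' x hx).continuousWithinAt
      have hmono := monotoneOn_of_hasDerivWithinAt_nonneg (convex_Ici 0) hcont hg hg0
      have := hmono (Set.self_mem_Ici) (Set.mem_Ici.mpr ht) ht
      simp only at this
      rw [hinit (i + 1) (by omega), zero_pow (by omega), sub_zero] at this
      linarith
  intro i hi t ht
  have : (d ^ i - 1) / (d - 1) = E i := (Nat.geomSum_eq hd i).symm
  rw [this]
  exact main i t ht
end

section
/- Let d ≥ 2 and b ≥ 1 be integers and let s : ℕ → ℝ → ℝ satisfy: s_0(t) = 1 for all t ≥ 0, s_i(0) = 0 and s_i(t) ≥ 0 for all i ≥ 1 and t ≥ 0, and for each i ≥ 1, s_i is differentiable on [0,∞) with s_i′(t) = (s_{i−1}(t))^d − (s_i(t))^d. Then for every real T with 0 ≤ T ≤ 1, ∫_0^T (s_b(t))^d dt ≤ T^{1 + d(d^b − 1)/(d − 1)} = T · T^{(d^b − 1)·(1 + 1/(d−1))}. -/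
def fluidE (d : ℕ) : ℕ → ℕ
  | 0 => 0
  | (i+1) => d * fluidE d i + 1

lemma fluidE_spec (d : ℕ) (i : ℕ) : (d - 1) * fluidE d i + 1 = d ^ i ∨ d < 2 := by
  by_cases hd : 2 ≤ d
  · left
    induction i with
    | zero => simp [fluidE]
    | succ i ih =>
      have : (d - 1) * fluidE d (i+1) + 1 = d * ((d - 1) * fluidE d i + 1) := by
        simp [fluidE]
        have : d - 1 + 1 = d := by omega
        nlinarith [this]
      rw [this, ih]
      ring
  · right; omega

/-- Fluid-limit analysis of hashing with `d ≥ 2` hash functions: under the ODE system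
`s i′ = (s (i−1))^d − (s i)^d` with `s 0 ≡ 1`, `s i 0 = 0` and `s i ≥ 0` for `i ≥ 1`,
for every `b ≥ 1` and every `T` with `0 ≤ T ≤ 1`,
`∫_0^T (s b t)^d dt ≤ T^{1 + d(d^b − 1)/(d − 1)}`. -/
theorem fluid_limit_overflow_bound (d : ℕ) (hd : 2 ≤ d) (b : ℕ) (hb : 1 ≤ b)
    (s : ℕ → ℝ → ℝ)
    (hs0 : ∀ t : ℝ, 0 ≤ t → s 0 t = 1)
    (hinit : ∀ i : ℕ, 1 ≤ i → s i 0 = 0)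
    (hnonneg : ∀ i : ℕ, 1 ≤ i → ∀ t : ℝ, 0 ≤ t → 0 ≤ s i t)
    (hderiv : ∀ i : ℕ, 1 ≤ i → ∀ t : ℝ, 0 ≤ t →
      HasDerivWithinAt (s i) ((s (i - 1) t) ^ d - (s i t) ^ d) (Set.Ici 0) t)
    (T : ℝ) (hT0 : 0 ≤ T) (hT1 : T ≤ 1) :
    (∫ t in (0 : ℝ)..T, (s b t) ^ d) ≤ T ^ (1 + d * (d ^ b - 1) / (d - 1)) := by
  -- exponent rewriting
  have hexp : 1 + d * (d ^ b - 1) / (d - 1) = 1 + d * fluidE d b := by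
    have hspec : (d - 1) * fluidE d b + 1 = d ^ b := (fluidE_spec d b).resolve_right (by omega)
    have h0 : d ^ b - 1 = (d - 1) * fluidE d b := by omega
    have h1 : d * (d ^ b - 1) = (d - 1) * (d * fluidE d b) := by rw [h0]; ring
    rw [h1, Nat.mul_div_cancel_left _ (by omega : 0 < d - 1)]
  rw [hexp]
  have hnn : ∀ i : ℕ, ∀ t : ℝ, 0 ≤ t → 0 ≤ s i t := by
    intro i t ht
    cases i with
    | zero => rw [hs0 t ht]; norm_num
    | succ i => exact hnonneg _ (Nat.succ_le_succ (Nat.zero_le _)) t ht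
  have hcont : ∀ i : ℕ, 1 ≤ i → ContinuousOn (s i) (Set.Ici 0) := fun i hi t ht =>
    (hderiv i hi t ht).continuousWithinAt
  -- key pointwise bound
  have key : ∀ i : ℕ, ∀ t : ℝ, 0 ≤ t → s i t ≤ t ^ (fluidE d i) := by
    intro i
    induction i with
    | zero => intro t ht; rw [hs0 t ht]; simp [fluidE]
    | succ i ih =>
      intro t ht
      set m := d * fluidE d i with hm
      set n := m + 1 with hn
      have hfe : fluidE d (i+1) = n := rfl
      have hi1 : 1 ≤ i + 1 := Nat.succ_le_succ (Nat.zero_le _)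
      have hnR : (1 : ℝ) ≤ (n : ℝ) := by exact_mod_cast Nat.one_le_iff_ne_zero.mpr (by omega)
      set F : ℝ → ℝ := fun t => t ^ n / (n : ℝ) - s (i+1) t with hF
      have hmono : MonotoneOn F (Set.Ici (0:ℝ)) := by
        apply monotoneOn_of_hasDerivWithinAt_nonneg (convex_Ici 0)
          (f' := fun x => x ^ m - ((s i x) ^ d - (s (i+1) x) ^ d))
        · exact ((continuousOn_pow n).div_const _).sub (hcont (i+1) hi1)
        · intro x hx
          rw [interior_Ici] at hx ⊢
          have h1 : HasDerivWithinAt (fun t : ℝ => t ^ n / (n : ℝ)) (x ^ m) (Set.Ioi 0) x := by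
            have := ((hasDerivAt_pow n x).div_const (n : ℝ)).hasDerivWithinAt
              (s := Set.Ioi (0:ℝ))
            have hn0 : (n:ℝ) ≠ 0 := by linarith
            rw [show n - 1 = m by omega, mul_div_cancel_left₀ _ hn0] at this
            exact this
          have h2 : HasDerivWithinAt (s (i+1)) ((s i x) ^ d - (s (i+1) x) ^ d)
              (Set.Ioi 0) x := by
            have := (hderiv (i+1) hi1 x (le_of_lt hx)).mono (Set.Ioi_subset_Ici_self)
            simpa using this
          exact h1.sub h2
        · intro x hx
          rw [interior_Ici] at hx
          have hx0 : (0:ℝ) ≤ x := le_of_lt hx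
          have h1 : (s i x) ^ d ≤ x ^ m := by
            calc (s i x) ^ d ≤ (x ^ fluidE d i) ^ d :=
                  pow_le_pow_left₀ (hnn i x hx0) (ih x hx0) d
              _ = x ^ m := by rw [← pow_mul, hm, mul_comm]
          have h2 : 0 ≤ (s (i+1) x) ^ d := pow_nonneg (hnn (i+1) x hx0) d
          nlinarith
      have hF0 : F 0 = 0 := by
        simp [hF, hinit (i+1) hi1, zero_pow (by omega : n ≠ 0)]
      have := hmono (Set.self_mem_Ici) (Set.mem_Ici.mpr ht) ht
      rw [hF0] at this
      have hstep : s (i+1) t ≤ t ^ n / (n : ℝ) := by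
        have : 0 ≤ t ^ n / (n:ℝ) - s (i+1) t := this
        linarith
      calc s (i+1) t ≤ t ^ n / (n : ℝ) := hstep
        _ ≤ t ^ n := div_le_self (pow_nonneg ht n) hnR
  -- integral bound
  set m := d * fluidE d b with hm
  have hbound : ∀ t ∈ Set.Icc (0:ℝ) T, (s b t) ^ d ≤ t ^ m := by
    intro t ht
    calc (s b t) ^ d ≤ (t ^ fluidE d b) ^ d := pow_le_pow_left₀ (hnn b t ht.1) (key b t ht.1) d
      _ = t ^ m := by rw [← pow_mul, hm, mul_comm]
  have hint1 : IntervalIntegrable (fun t => (s b t) ^ d) MeasureTheory.volume 0 T := by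
    apply ContinuousOn.intervalIntegrable
    have : ContinuousOn (s b) (Set.uIcc 0 T) := by
      apply (hcont b hb).mono
      rw [Set.uIcc_of_le hT0]
      exact fun x hx => hx.1
    exact this.pow d
  have hint2 : IntervalIntegrable (fun t : ℝ => t ^ m) MeasureTheory.volume 0 T :=
    (continuous_pow m).intervalIntegrable 0 T
  have h1 : (∫ t in (0:ℝ)..T, (s b t) ^ d) ≤ ∫ t in (0:ℝ)..T, t ^ m := by
    apply intervalIntegral.integral_mono_on hT0 hint1 hint2
    exact hbound
  have h2 : (∫ t in (0:ℝ)..T, t ^ m) = T ^ (m+1) / (m+1 : ℝ) := by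
    rw [integral_pow]
    simp
  have h3 : T ^ (m+1) / ((m:ℝ)+1) ≤ T ^ (m+1) :=
    div_le_self (pow_nonneg hT0 _) (by exact_mod_cast Nat.le_add_left 1 m)
  have : (1 + m) = m + 1 := by omega
  rw [this]
  calc (∫ t in (0:ℝ)..T, (s b t) ^ d) ≤ T ^ (m+1) / ((m:ℝ)+1) := by
        rw [← h2] at *; push_cast at *; linarith
    _ ≤ T ^ (m+1) := h3
end
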